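/- Let α ≥ 3 be a cardinal, let θ be an infinite cardinal, and let λ be a cardinal with cf(2^θ) ≤ λ < 2^θ and θ < λ. Then there is no universal K_α-free graph of cardinality λ; that is, there is no K_α-free graph G of cardinality λ such that every K_α-free graph of cardinality λ embeds as an induced subgraph into G. -/

import Mathlib

universe u

open Cardinal

/-- `G` is `K_α`-free: there is no injective map from a type of cardinality `α` into
the vertices of `G` whose images are pairwise adjacent. -/
def KCliqueFree (α : Cardinal.{u}) {V : Type u} (G : SimpleGraph V) : Prop :=
  ¬ ∃ (ι : Type u) (f : ι → V), #ι = α ∧ Function.Injective f ∧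
      ∀ i j : ι, i ≠ j → G.Adj (f i) (f j)

set_option maxHeartbeats 1000000 in
/-- For a cardinal `α ≥ 3`, an infinite `θ`, and `λ` with `cf(2^θ) ≤ λ < 2^θ` and
`θ < λ`, there is no universal `K_α`-free graph of cardinality `λ`. -/
theorem stmt8 (α θ lam : Cardinal.{u}) (hα : 3 ≤ α) (hθ : ℵ₀ ≤ θ)
    (hcf : ((2 : Cardinal.{u}) ^ θ).ord.cof ≤ lam) (hlt : lam < 2 ^ θ) (hθlam : θ < lam) :
    ¬ ∃ (V : Type u) (G : SimpleGraph V), #V = lam ∧ KCliqueFree α G ∧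
        ∀ (W : Type u) (H : SimpleGraph W), #W = lam → KCliqueFree α H →
          Nonempty (H ↪g G) := by
  rintro ⟨V, G, hV, -, huniv⟩
  set μ : Cardinal.{u} := 2 ^ θ with hμdef
  have hθμ : θ < μ := cantor θ
  have hμinf : ℵ₀ ≤ μ := hθ.trans hθμ.le
  have hlaminf : ℵ₀ ≤ lam := hθ.trans hθlam.le
  set Θ : Type u := θ.out with hΘ
  have hΘcard : #Θ = θ := mk_out θ
  -- the function space has cardinality μ
  have hF : #(Θ → V) = μ := by
    have h1 : #(Θ → V) = lam ^ θ := by rw [← power_def, hV, hΘcard]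
    rw [h1]
    apply le_antisymm
    · calc lam ^ θ ≤ μ ^ θ := power_le_power_right hlt.le
        _ = 2 ^ (θ * θ) := by rw [hμdef, ← power_mul]
        _ = μ := by rw [mul_eq_self hθ]
    · have h2 : (2 : Cardinal) ≤ lam := (nat_lt_aleph0 2).le.trans hlaminf
      exact power_le_power_right h2
  -- enumerate functions by μ.ord.ToType
  obtain ⟨rk⟩ : Nonempty ((Θ → V) ≃ μ.ord.ToType) :=
    Cardinal.eq.1 (hF.trans (mk_ord_toType μ).symm)
  -- cofinal set
  haveI : IsWellOrder μ.ord.ToType (· < ·) := isWellOrder_lt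
  obtain ⟨S, hSu, hScard⟩ := Order.exists_cof_eq μ.ord.ToType
  have hScard' : #S ≤ lam := by
    rw [hScard, Ordinal.cof_toType] at *
    exact hcf
  haveI : NoMaxOrder μ.ord.ToType := Cardinal.noMaxOrder hμinf
  -- realized subsets
  let Real : (Θ → V) → Set (Set Θ) := fun f => Set.range (fun v : V => {x : Θ | G.Adj (f x) v})
  have hReal : ∀ f, #(Real f) ≤ lam := fun f => (mk_range_le).trans_eq hV
  let UB : μ.ord.ToType → Set (Set Θ) := fun t => ⋃ (f : {f : Θ → V // rk f ≤ t}), Real f.1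
  have hUB : ∀ t, #(UB t) < μ := by
    intro t
    obtain ⟨t', ht'⟩ := exists_gt t
    have hB : #{f : Θ → V // rk f ≤ t} < μ := by
      have hinj : Function.Injective
          (fun f : {f : Θ → V // rk f ≤ t} => (⟨rk f.1, lt_of_le_of_lt f.2 ht'⟩ :
            {y : μ.ord.ToType // y < t'})) := by
        intro a b hab
        exact Subtype.ext (rk.injective (by simpa using congrArg Subtype.val hab))
      have h1 : #{f : Θ → V // rk f ≤ t} ≤ #{y : μ.ord.ToType // y < t'} := mk_le_of_injective hinj
      have h2 : #{y : μ.ord.ToType // y < t'} = (Ordinal.typein (α := μ.ord.ToType) (· < ·) t').card :=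
        (Ordinal.card_typein (r := (· < ·)) t').symm
      have h3 : Ordinal.typein (α := μ.ord.ToType) (· < ·) t' < μ.ord := by
        have := Ordinal.typein_lt_type (α := μ.ord.ToType) (· < ·) t'
        rwa [Ordinal.type_toType] at this
      exact h1.trans_lt (h2.le.trans_lt (Cardinal.lt_ord.1 h3))
    calc #(UB t) ≤ Cardinal.sum (fun f : {f : Θ → V // rk f ≤ t} => #(Real f.1)) :=
          mk_iUnion_le_sum_mk
      _ ≤ Cardinal.sum (fun _ : {f : Θ → V // rk f ≤ t} => lam) :=
          Cardinal.sum_le_sum _ _ (fun f => hReal f.1)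
      _ = #{f : Θ → V // rk f ≤ t} * lam := Cardinal.sum_const' _ _
      _ < μ := mul_lt_of_lt hμinf hB hlt
  -- choose a set avoided by each UB t
  have hex : ∀ t, ∃ A : Set Θ, A ∉ UB t := by
    intro t
    by_contra h
    push_neg at h
    have : UB t = Set.univ := Set.eq_univ_of_forall h
    have : #(UB t) = μ := by
      rw [this, mk_univ, mk_set, hΘcard]
    exact absurd this (hUB t).ne
  choose A hA using hex
  -- build the bipartite test graph
  set W : Type u := (Θ ⊕ ↥S) ⊕ lam.out with hW
  let radj : W → W → Prop := fun u v => ∃ (x : Θ) (t : ↥S), x ∈ A t.1 ∧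
    ((u = .inl (.inl x) ∧ v = .inl (.inr t)) ∨ (u = .inl (.inr t) ∧ v = .inl (.inl x)))
  let H : SimpleGraph W :=
    { Adj := radj
      symm := by
        constructor
        rintro u v ⟨x, t, hx, h | h⟩
        · exact ⟨x, t, hx, Or.inr ⟨h.2, h.1⟩⟩
        · exact ⟨x, t, hx, Or.inl ⟨h.2, h.1⟩⟩
      loopless := by
        constructor
        rintro u ⟨x, t, hx, ⟨h1, h2⟩ | ⟨h1, h2⟩⟩ <;> rw [h1] at h2
        · exact Sum.inl_ne_inr (Sum.inl.inj h2)
        · exact Sum.inr_ne_inl (Sum.inl.inj h2) }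
  -- bipartition
  let bip : W → Bool := fun w => match w with
    | .inl (.inl _) => false
    | .inl (.inr _) => true
    | .inr _ => true
  have hbip : ∀ u v, H.Adj u v → bip u ≠ bip v := by
    rintro u v ⟨x, t, hx, ⟨h1, h2⟩ | ⟨h1, h2⟩⟩ <;> subst h1 <;> subst h2 <;> simp [bip]
  -- cardinality of W
  have hWcard : #W = lam := by
    have : #W = θ + #S + lam := by
      rw [hW, mk_sum, mk_sum, hΘcard, mk_out, lift_id, lift_id, lift_id, lift_id]
    rw [this, Cardinal.add_eq_right hlaminf]
    calc θ + #S ≤ lam + lam := add_le_add hθlam.le hScard'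
      _ = lam := Cardinal.add_eq_self hlaminf
  -- H is K_α-free
  have hHfree : KCliqueFree α H := by
    rintro ⟨ι, f, hι, hinj, hadj⟩
    have h3 : 3 ≤ #ι := hι ▸ hα
    have : Nonempty ι := by
      rw [← Cardinal.mk_ne_zero_iff]
      intro h0
      rw [h0] at h3
      exact absurd h3 (by norm_num)
    obtain i := Classical.arbitrary ι
    obtain ⟨j, hji, -⟩ := Cardinal.three_le h3 i i
    obtain ⟨k, hki, hkj⟩ := Cardinal.three_le h3 i j
    have b1 := hbip _ _ (hadj j i hji)
    have b2 := hbip _ _ (hadj k i hki)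
    have b3 := hbip _ _ (hadj k j hkj)
    revert b1 b2 b3
    generalize bip (f i) = bi
    generalize bip (f j) = bj
    generalize bip (f k) = bk
    cases bi <;> cases bj <;> cases bk <;> decide
  -- embed H into G
  obtain ⟨e⟩ := huniv W H hWcard hHfree
  let f0 : Θ → V := fun x => e (.inl (.inl x))
  have key : ∀ t : ↥S, A t.1 ∈ Real f0 := by
    intro t
    refine ⟨e (.inl (.inr t)), ?_⟩
    ext x
    simp only [Set.mem_setOf_eq]
    constructor
    · intro hadj
      have : H.Adj (.inl (.inl x)) (.inl (.inr t)) := e.map_adj_iff.1 hadj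
      obtain ⟨x', t', hx', ⟨h1, h2⟩ | ⟨h1, h2⟩⟩ := this
      · obtain rfl : x = x' := Sum.inl.inj (Sum.inl.inj h1)
        obtain rfl : t = t' := Sum.inr.inj (Sum.inl.inj h2)
        exact hx'
      · exact (Sum.inl_ne_inr (Sum.inl.inj h1)).elim
    · intro hx
      exact e.map_adj_iff.2 ⟨x, t, hx, Or.inl ⟨rfl, rfl⟩⟩
  -- contradiction via cofinality
  obtain ⟨t, htS, htle⟩ := hSu (rk f0)
  have hle : rk f0 ≤ t := htle
  have : A t ∈ UB t := Set.mem_iUnion.2 ⟨⟨f0, hle⟩, key ⟨t, htS⟩⟩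
  exact hA t this
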